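/- In the two-player interconnected contest with Tullock contest success function with parameter γ ∈ (0,1], for any pair (y*_1, y*_2) ∈ T_1 × T_2 of equilibrium effective-effort vectors (possibly arising from different equilibria), any player i ∈ {1,2}, any battlefield k ∈ B, and any other equilibrium effective-effort vector y**_{-i} ∈ T_{-i} of the opponent, either y*_i^k = 0 or y*_{-i}^k = y**_{-i}^k. -/

import Mathlib

open Finset Matrix

/-- Effective effort of a player with spillover matrix `ρ` and effort vector `e`
at battlefield `k`: `y^k = e^k + ∑_{l ≠ k} ρ^{l,k} e^l`. -/
noncomputable def effY {m : ℕ} (ρ : Matrix (Fin m) (Fin m) ℝ) (e : Fin m → ℝ)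
    (k : Fin m) : ℝ :=
  e k + ∑ l ∈ Finset.univ.erase k, ρ l k * e l

/-- Tullock contest success function with parameter `γ`.  When both effective
efforts are `0` this gives `0/0 = 0`, matching the convention. -/
noncomputable def tullock (γ y₁ y₂ : ℝ) : ℝ :=
  y₁ ^ γ / (y₁ ^ γ + y₂ ^ γ)

/-- Payoff of player `i` in the interconnected contest. -/
noncomputable def payoff {m : ℕ} (γ : ℝ) (v : Fin m → ℝ) (c : Fin 2 → ℝ)
    (ρ : Fin 2 → Matrix (Fin m) (Fin m) ℝ) (e : Fin 2 → Fin m → ℝ) (i : Fin 2) : ℝ :=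
  (∑ k, v k * tullock γ (effY (ρ i) (e i) k) (effY (ρ (1 - i)) (e (1 - i)) k))
    - c i * ∑ k, e i k

/-- Pure strategy Nash equilibrium of the interconnected contest:
nonnegative efforts, and no profitable deviation to any nonnegative effort vector. -/
def IsNashEq {m : ℕ} (γ : ℝ) (v : Fin m → ℝ) (c : Fin 2 → ℝ)
    (ρ : Fin 2 → Matrix (Fin m) (Fin m) ℝ) (e : Fin 2 → Fin m → ℝ) : Prop :=
  (∀ i k, 0 ≤ e i k) ∧
  ∀ (i : Fin 2) (e' : Fin m → ℝ), (∀ k, 0 ≤ e' k) →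
    payoff γ v c ρ (Function.update e i e') i ≤ payoff γ v c ρ e i

/-- Winning probability of player `i` at battlefield `k` under profile `e`. -/
noncomputable def eqProb {m : ℕ} (γ : ℝ) (ρ : Fin 2 → Matrix (Fin m) (Fin m) ℝ)
    (e : Fin 2 → Fin m → ℝ) (i : Fin 2) (k : Fin m) : ℝ :=
  tullock γ (effY (ρ i) (e i) k) (effY (ρ (1 - i)) (e (1 - i)) k)

/-! ### Auxiliary lemmas: the Tullock CSF -/

section Tullock

lemma tullock_nonneg {γ x b : ℝ} (hx : 0 ≤ x) (hb : 0 ≤ b) : 0 ≤ tullock γ x b := by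
  unfold tullock; positivity

lemma tullock_le_one {γ x b : ℝ} (hx : 0 ≤ x) (hb : 0 ≤ b) : tullock γ x b ≤ 1 := by
  unfold tullock
  rcases eq_or_lt_of_le (show (0:ℝ) ≤ x ^ γ + b ^ γ by positivity) with h | h
  · rw [← h]; simp
  · rw [div_le_one h]
    nlinarith [Real.rpow_nonneg hb γ]

lemma tullock_zero_left {γ : ℝ} (hγ0 : 0 < γ) (b : ℝ) : tullock γ 0 b = 0 := by
  unfold tullock
  rw [Real.zero_rpow (ne_of_gt hγ0)]
  simp

lemma tullock_pos_zero {γ x : ℝ} (hγ0 : 0 < γ) (hx : 0 < x) : tullock γ x 0 = 1 := by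
  unfold tullock
  rw [Real.zero_rpow (ne_of_gt hγ0), add_zero, div_self (ne_of_gt (Real.rpow_pos_of_pos hx γ))]

lemma tullock_add_tullock {γ x b : ℝ} (hγ0 : 0 < γ) (hx : 0 ≤ x) (hb : 0 ≤ b) :
    tullock γ x b + tullock γ b x = if x = 0 ∧ b = 0 then 0 else 1 := by
  by_cases h : x = 0 ∧ b = 0
  · rcases h with ⟨rfl, rfl⟩
    simp [tullock, Real.zero_rpow (ne_of_gt hγ0)]
  · unfold tullock
    have hpos : 0 < x ^ γ + b ^ γ := by
      rcases (not_and_or.1 h) with h' | h'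
      · have : 0 < x := lt_of_le_of_ne hx (Ne.symm h')
        have := Real.rpow_pos_of_pos this γ
        nlinarith [Real.rpow_nonneg hb γ]
      · have : 0 < b := lt_of_le_of_ne hb (Ne.symm h')
        have := Real.rpow_pos_of_pos this γ
        nlinarith [Real.rpow_nonneg hx γ]
    rw [if_neg h, add_comm (b ^ γ) (x ^ γ), ← add_div]
    exact div_self (ne_of_gt hpos)

lemma tullock_mono {γ x x' b : ℝ} (hγ0 : 0 < γ) (hx : 0 ≤ x) (hb : 0 ≤ b) (hxx : x ≤ x') :
    tullock γ x b ≤ tullock γ x' b := by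
  unfold tullock
  rcases eq_or_lt_of_le hb with rfl | hb'
  · rw [Real.zero_rpow (ne_of_gt hγ0), add_zero, add_zero]
    rcases eq_or_lt_of_le hx with rfl | hx'
    · rw [Real.zero_rpow (ne_of_gt hγ0), zero_div]
      positivity
    · rw [div_self (ne_of_gt (Real.rpow_pos_of_pos hx' γ)),
        div_self (ne_of_gt (Real.rpow_pos_of_pos (lt_of_lt_of_le hx' hxx) γ))]
  · have hB : 0 < b ^ γ := Real.rpow_pos_of_pos hb' γ
    have hA : x ^ γ ≤ x' ^ γ := Real.rpow_le_rpow hx hxx (le_of_lt hγ0)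
    have hA0 : 0 ≤ x ^ γ := Real.rpow_nonneg hx γ
    rw [div_le_div_iff₀ (by nlinarith) (by nlinarith)]
    nlinarith

lemma frac_mono {B t t' : ℝ} (hB : 0 < B) (ht : 0 ≤ t) (htt : t ≤ t') :
    t / (t + B) ≤ t' / (t' + B) := by
  rw [div_le_div_iff₀ (by nlinarith) (by nlinarith)]
  nlinarith

lemma frac_midpoint {B t t' : ℝ} (hB : 0 < B) (ht : 0 ≤ t) (ht' : 0 ≤ t') :
    (t / (t + B) + t' / (t' + B)) / 2 ≤ ((t + t') / 2) / ((t + t') / 2 + B) := by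
  have h1 : 0 < t + B := by nlinarith
  have h2 : 0 < t' + B := by nlinarith
  have h3 : 0 < (t + t') / 2 + B := by nlinarith
  have key : ((t + t') / 2) / ((t + t') / 2 + B) - (t / (t + B) + t' / (t' + B)) / 2
      = B * (t - t') ^ 2 / (2 * ((t + B) * ((t' + B) * (t + t' + 2 * B)))) := by
    field_simp
    ring
  have hpos : (0:ℝ) ≤ B * (t - t') ^ 2 / (2 * ((t + B) * ((t' + B) * (t + t' + 2 * B)))) := by
    have h4 : 0 < t + t' + 2 * B := by nlinarith
    positivity
  linarith

lemma frac_midpoint_strict {B t t' : ℝ} (hB : 0 < B) (ht : 0 ≤ t) (ht' : 0 ≤ t')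
    (hne : t ≠ t') :
    (t / (t + B) + t' / (t' + B)) / 2 < ((t + t') / 2) / ((t + t') / 2 + B) := by
  have h1 : 0 < t + B := by nlinarith
  have h2 : 0 < t' + B := by nlinarith
  have h3 : 0 < (t + t') / 2 + B := by nlinarith
  have hd : t - t' ≠ 0 := sub_ne_zero.2 hne
  have key : ((t + t') / 2) / ((t + t') / 2 + B) - (t / (t + B) + t' / (t' + B)) / 2
      = B * (t - t') ^ 2 / (2 * ((t + B) * ((t' + B) * (t + t' + 2 * B)))) := by
    field_simp
    ring
  have hpos : (0:ℝ) < B * (t - t') ^ 2 / (2 * ((t + B) * ((t' + B) * (t + t' + 2 * B)))) := by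
    have h4 : 0 < t + t' + 2 * B := by nlinarith
    positivity
  linarith

lemma rpow_midpoint {γ x x' : ℝ} (hγ0 : 0 < γ) (hγ1 : γ ≤ 1) (hx : 0 ≤ x) (hx' : 0 ≤ x') :
    (x ^ γ + x' ^ γ) / 2 ≤ ((x + x') / 2) ^ γ := by
  have := (Real.concaveOn_rpow (le_of_lt hγ0) hγ1).2 (Set.mem_Ici.2 hx) (Set.mem_Ici.2 hx')
    (by norm_num : (0:ℝ) ≤ 1/2) (by norm_num : (0:ℝ) ≤ 1/2) (by norm_num)
  simp only [smul_eq_mul] at this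
  calc (x ^ γ + x' ^ γ) / 2 = 1/2 * x ^ γ + 1/2 * x' ^ γ := by ring
    _ ≤ (1/2 * x + 1/2 * x') ^ γ := this
    _ = ((x + x') / 2) ^ γ := by ring_nf

lemma tullock_midpoint {γ x x' b : ℝ} (hγ0 : 0 < γ) (hγ1 : γ ≤ 1)
    (hx : 0 ≤ x) (hx' : 0 ≤ x') (hb : 0 ≤ b) :
    (tullock γ x b + tullock γ x' b) / 2 ≤ tullock γ ((x + x') / 2) b := by
  rcases eq_or_lt_of_le hb with rfl | hb'
  · by_cases h : x = 0 ∧ x' = 0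
    · rcases h with ⟨rfl, rfl⟩
      simp [tullock, Real.zero_rpow (ne_of_gt hγ0)]
    · have hmid : 0 < (x + x') / 2 := by
        rcases (not_and_or.1 h) with h' | h'
        · have : 0 < x := lt_of_le_of_ne hx (Ne.symm h'); linarith
        · have : 0 < x' := lt_of_le_of_ne hx' (Ne.symm h'); linarith
      rw [tullock_pos_zero hγ0 hmid]
      have l1 : tullock γ x 0 ≤ 1 := tullock_le_one hx le_rfl
      have l2 : tullock γ x' 0 ≤ 1 := tullock_le_one hx' le_rfl
      linarith
  · have hB : 0 < b ^ γ := Real.rpow_pos_of_pos hb' γ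
    have hA : 0 ≤ x ^ γ := Real.rpow_nonneg hx γ
    have hA' : 0 ≤ x' ^ γ := Real.rpow_nonneg hx' γ
    have hmid : (x ^ γ + x' ^ γ) / 2 ≤ ((x + x') / 2) ^ γ := rpow_midpoint hγ0 hγ1 hx hx'
    unfold tullock
    calc (x ^ γ / (x ^ γ + b ^ γ) + x' ^ γ / (x' ^ γ + b ^ γ)) / 2
        ≤ ((x ^ γ + x' ^ γ) / 2) / ((x ^ γ + x' ^ γ) / 2 + b ^ γ) :=
          frac_midpoint hB hA hA'
      _ ≤ ((x + x') / 2) ^ γ / (((x + x') / 2) ^ γ + b ^ γ) :=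
          frac_mono hB (by positivity) hmid

lemma tullock_midpoint_strict {γ x x' b : ℝ} (hγ0 : 0 < γ) (hγ1 : γ ≤ 1)
    (hx : 0 ≤ x) (hx' : 0 ≤ x') (hb : 0 < b) (hne : x ≠ x') :
    (tullock γ x b + tullock γ x' b) / 2 < tullock γ ((x + x') / 2) b := by
  have hB : 0 < b ^ γ := Real.rpow_pos_of_pos hb γ
  have hA : 0 ≤ x ^ γ := Real.rpow_nonneg hx γ
  have hA' : 0 ≤ x' ^ γ := Real.rpow_nonneg hx' γ
  have hAne : x ^ γ ≠ x' ^ γ := by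
    rcases lt_or_gt_of_ne hne with h | h
    · exact ne_of_lt (Real.rpow_lt_rpow hx h hγ0)
    · exact ne_of_gt (Real.rpow_lt_rpow hx' h hγ0)
  have hmid : (x ^ γ + x' ^ γ) / 2 ≤ ((x + x') / 2) ^ γ := rpow_midpoint hγ0 hγ1 hx hx'
  unfold tullock
  calc (x ^ γ / (x ^ γ + b ^ γ) + x' ^ γ / (x' ^ γ + b ^ γ)) / 2
      < ((x ^ γ + x' ^ γ) / 2) / ((x ^ γ + x' ^ γ) / 2 + b ^ γ) :=
        frac_midpoint_strict hB hA hA' hAne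
    _ ≤ ((x + x') / 2) ^ γ / (((x + x') / 2) ^ γ + b ^ γ) :=
        frac_mono hB (by positivity) hmid

end Tullock

/-! ### Auxiliary lemmas: effective efforts -/

section EffY
variable {m : ℕ} {ρ : Matrix (Fin m) (Fin m) ℝ}

lemma effY_nonneg (hρ : ∀ k l, 0 ≤ ρ k l) {e : Fin m → ℝ} (he : ∀ k, 0 ≤ e k) (k : Fin m) :
    0 ≤ effY ρ e k := by
  unfold effY
  have : (0:ℝ) ≤ ∑ l ∈ Finset.univ.erase k, ρ l k * e l :=
    Finset.sum_nonneg fun l _ => mul_nonneg (hρ l k) (he l)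
  linarith [he k]

lemma effY_mono (hρ : ∀ k l, 0 ≤ ρ k l) {e e' : Fin m → ℝ} (h : ∀ k, e k ≤ e' k) (k : Fin m) :
    effY ρ e k ≤ effY ρ e' k := by
  unfold effY
  have : ∑ l ∈ Finset.univ.erase k, ρ l k * e l ≤ ∑ l ∈ Finset.univ.erase k, ρ l k * e' l :=
    Finset.sum_le_sum fun l _ => mul_le_mul_of_nonneg_left (h l) (hρ l k)
  linarith [h k]

lemma effY_self_le (hρ : ∀ k l, 0 ≤ ρ k l) {e : Fin m → ℝ} (he : ∀ k, 0 ≤ e k) (k : Fin m) :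
    e k ≤ effY ρ e k := by
  unfold effY
  have : (0:ℝ) ≤ ∑ l ∈ Finset.univ.erase k, ρ l k * e l :=
    Finset.sum_nonneg fun l _ => mul_nonneg (hρ l k) (he l)
  linarith

lemma effY_half (u w : Fin m → ℝ) (k : Fin m) :
    effY ρ (fun l => (u l + w l) / 2) k = (effY ρ u k + effY ρ w k) / 2 := by
  unfold effY
  rw [Finset.sum_congr rfl (fun l _ => by ring_nf :
    ∀ l ∈ Finset.univ.erase k, ρ l k * ((u l + w l) / 2) = (ρ l k * u l + ρ l k * w l) / 2)]
  simp only [← Finset.sum_div, Finset.sum_add_distrib]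
  ring

lemma sum_half (u w : Fin m → ℝ) :
    ∑ l, (u l + w l) / 2 = ((∑ l, u l) + ∑ l, w l) / 2 := by
  simp only [← Finset.sum_div, Finset.sum_add_distrib]

end EffY

/-! ### Fin 2 arithmetic -/

lemma fin2_sub_sub (i : Fin 2) : 1 - (1 - i) = i := by fin_cases i <;> rfl

lemma fin2_sub_ne (i : Fin 2) : 1 - i ≠ i := by fin_cases i <;> decide

/-! ### The per-player payoff function `P` and equilibrium reformulation -/

open scoped Classical

/-- Payoff of player `i` with own strategy `x` against opponent strategy `z`. -/
noncomputable def Ppay {m : ℕ} (γ : ℝ) (v : Fin m → ℝ) (c : Fin 2 → ℝ)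
    (ρ : Fin 2 → Matrix (Fin m) (Fin m) ℝ) (i : Fin 2) (x z : Fin m → ℝ) : ℝ :=
  (∑ k, v k * tullock γ (effY (ρ i) x k) (effY (ρ (1 - i)) z k)) - c i * ∑ k, x k

/-- Total value of battlefields where both effective efforts vanish. -/
noncomputable def DZv {m : ℕ} (v : Fin m → ℝ)
    (ρ : Fin 2 → Matrix (Fin m) (Fin m) ℝ) (i : Fin 2) (x z : Fin m → ℝ) : ℝ :=
  ∑ k ∈ Finset.univ.filter
      (fun k => effY (ρ i) x k = 0 ∧ effY (ρ (1 - i)) z k = 0), v k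

section Pmach
variable {m : ℕ} {γ : ℝ} {v : Fin m → ℝ} {c : Fin 2 → ℝ}
  {ρ : Fin 2 → Matrix (Fin m) (Fin m) ℝ}

lemma payoff_eq_P (e : Fin 2 → Fin m → ℝ) (i : Fin 2) :
    payoff γ v c ρ e i = Ppay γ v c ρ i (e i) (e (1 - i)) := rfl

lemma nash_P {e : Fin 2 → Fin m → ℝ} (h : IsNashEq γ v c ρ e) (i : Fin 2)
    (e' : Fin m → ℝ) (he' : ∀ k, 0 ≤ e' k) :
    Ppay γ v c ρ i e' (e (1 - i)) ≤ Ppay γ v c ρ i (e i) (e (1 - i)) := by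
  have h2 := h.2 i e' he'
  rw [payoff_eq_P, payoff_eq_P] at h2
  rwa [Function.update_self, Function.update_of_ne (fin2_sub_ne i)] at h2

lemma DZv_nonneg (hv : ∀ k, 0 < v k) (i : Fin 2) (x z : Fin m → ℝ) :
    0 ≤ DZv v ρ i x z :=
  Finset.sum_nonneg fun k _ => (hv k).le

lemma DZv_symm (i : Fin 2) (x z : Fin m → ℝ) :
    DZv v ρ (1 - i) z x = DZv v ρ i x z := by
  unfold DZv
  rw [fin2_sub_sub]
  apply Finset.sum_congr _ (fun _ _ => rfl)
  ext k
  simp only [Finset.mem_filter, Finset.mem_univ, true_and]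
  tauto

/-- The "strategically zero-sum" identity. -/
lemma P_add_P (hγ0 : 0 < γ) (hρ : ∀ i k l, 0 ≤ ρ i k l) (i : Fin 2) {x z : Fin m → ℝ}
    (hx : ∀ k, 0 ≤ x k) (hz : ∀ k, 0 ≤ z k) :
    Ppay γ v c ρ i x z + Ppay γ v c ρ (1 - i) z x
      = (∑ k, v k) - DZv v ρ i x z - c i * ∑ k, x k - c (1 - i) * ∑ k, z k := by
  unfold Ppay
  rw [fin2_sub_sub]
  have key : ∀ k : Fin m,
      v k * tullock γ (effY (ρ i) x k) (effY (ρ (1 - i)) z k)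
        + v k * tullock γ (effY (ρ (1 - i)) z k) (effY (ρ i) x k)
      = v k - (if effY (ρ i) x k = 0 ∧ effY (ρ (1 - i)) z k = 0 then v k else 0) := by
    intro k
    rw [← mul_add, tullock_add_tullock hγ0 (effY_nonneg (hρ i) hx k)
      (effY_nonneg (hρ (1 - i)) hz k)]
    split <;> ring
  have hsum : (∑ k, v k * tullock γ (effY (ρ i) x k) (effY (ρ (1 - i)) z k))
      + ∑ k, v k * tullock γ (effY (ρ (1 - i)) z k) (effY (ρ i) x k)
      = (∑ k, v k) - DZv v ρ i x z := by
    rw [← Finset.sum_add_distrib, Finset.sum_congr rfl (fun k _ => key k),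
      Finset.sum_sub_distrib]
    unfold DZv
    rw [Finset.sum_filter]
  linarith [hsum]

end Pmach

section Dev
variable {m : ℕ} {γ : ℝ} {v : Fin m → ℝ} {c : Fin 2 → ℝ}
  {ρ : Fin 2 → Matrix (Fin m) (Fin m) ℝ}

/-- Deviation gain: adding `ε` effort on every battlefield of a doubly-zero set `K`
wins all of those battlefields. -/
lemma dev_gain (hγ0 : 0 < γ) (hv : ∀ k, 0 < v k) (hρ : ∀ i k l, 0 ≤ ρ i k l)
    (i : Fin 2) {x z : Fin m → ℝ} (hx : ∀ k, 0 ≤ x k) (hz : ∀ k, 0 ≤ z k)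
    {K : Finset (Fin m)}
    (hK : ∀ k ∈ K, effY (ρ i) x k = 0 ∧ effY (ρ (1 - i)) z k = 0)
    {ε : ℝ} (hε : 0 < ε) :
    Ppay γ v c ρ i x z + (∑ k ∈ K, v k) - c i * (ε * K.card)
      ≤ Ppay γ v c ρ i (fun l => x l + if l ∈ K then ε else 0) z := by
  set d : Fin m → ℝ := fun l => x l + if l ∈ K then ε else 0 with hd
  have hxd : ∀ l, x l ≤ d l := by
    intro l
    simp only [hd]
    split <;> [linarith; linarith]
  have hdnn : ∀ l, 0 ≤ d l := fun l => le_trans (hx l) (hxd l)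
  have hYle : ∀ k, effY (ρ i) x k ≤ effY (ρ i) d k := effY_mono (hρ i) hxd
  have hYK : ∀ k ∈ K, 0 < effY (ρ i) d k := by
    intro k hk
    have h1 : ε ≤ d k := by simp [hd, if_pos hk, hx k]
    have := effY_self_le (hρ i) hdnn k
    linarith
  -- sum of efforts of d
  have hsumd : ∑ l, d l = (∑ l, x l) + ε * K.card := by
    simp only [hd]
    rw [Finset.sum_add_distrib, Finset.sum_ite_mem]
    simp [Finset.sum_const, mul_comm]
  -- sum of probabilities
  have hterm : ∀ k : Fin m,
      v k * tullock γ (effY (ρ i) x k) (effY (ρ (1 - i)) z k)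
        + (if k ∈ K then v k else 0)
      ≤ v k * tullock γ (effY (ρ i) d k) (effY (ρ (1 - i)) z k) := by
    intro k
    by_cases hk : k ∈ K
    · rcases hK k hk with ⟨h1, h2⟩
      rw [h1, h2, tullock_zero_left hγ0, if_pos hk, tullock_pos_zero hγ0 (hYK k hk)]
      simp
    · rw [if_neg hk, add_zero]
      exact mul_le_mul_of_nonneg_left
        (tullock_mono hγ0 (effY_nonneg (hρ i) hx k) (effY_nonneg (hρ (1 - i)) hz k) (hYle k))
        (hv k).le
  have hsum : (∑ k, v k * tullock γ (effY (ρ i) x k) (effY (ρ (1 - i)) z k))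
      + (∑ k ∈ K, v k)
      ≤ ∑ k, v k * tullock γ (effY (ρ i) d k) (effY (ρ (1 - i)) z k) := by
    have : (∑ k ∈ K, v k) = ∑ k, (if k ∈ K then v k else 0) := by
      rw [Finset.sum_ite_mem]
      simp
    rw [this, ← Finset.sum_add_distrib]
    exact Finset.sum_le_sum fun k _ => hterm k
  unfold Ppay
  rw [hsumd]
  have := mul_nonneg (le_of_lt hε) (Nat.cast_nonneg K.card : (0:ℝ) ≤ K.card)
  nlinarith [hsum]

/-- A best response against `z` does at least as well as any `x` plus the value of the
doubly-zero battlefields of `(x, z)`. -/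
lemma br_dom (hγ0 : 0 < γ) (hv : ∀ k, 0 < v k) (hc : ∀ i, 0 < c i)
    (hρ : ∀ i k l, 0 ≤ ρ i k l) (i : Fin 2) {u x z : Fin m → ℝ}
    (hx : ∀ k, 0 ≤ x k) (hz : ∀ k, 0 ≤ z k)
    (hBR : ∀ e', (∀ k, 0 ≤ e' k) → Ppay γ v c ρ i e' z ≤ Ppay γ v c ρ i u z) :
    Ppay γ v c ρ i x z + DZv v ρ i x z ≤ Ppay γ v c ρ i u z := by
  set K : Finset (Fin m) :=
    Finset.univ.filter (fun k => effY (ρ i) x k = 0 ∧ effY (ρ (1 - i)) z k = 0) with hKdef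
  have hK : ∀ k ∈ K, effY (ρ i) x k = 0 ∧ effY (ρ (1 - i)) z k = 0 := by
    intro k hk
    exact (Finset.mem_filter.1 hk).2
  have hDZ : DZv v ρ i x z = ∑ k ∈ K, v k := rfl
  by_contra hcon
  push_neg at hcon
  set δ : ℝ := Ppay γ v c ρ i x z + DZv v ρ i x z - Ppay γ v c ρ i u z with hδdef
  have hδ : 0 < δ := by linarith
  set ε : ℝ := δ / (c i * (K.card + 1)) with hεdef
  have hci := hc i
  have hcard : (0:ℝ) < (K.card : ℝ) + 1 := by positivity
  have hε : 0 < ε := by positivity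
  have h1 := dev_gain (c := c) hγ0 hv hρ i hx hz hK hε
  have h2 := hBR (fun l => x l + if l ∈ K then ε else 0)
    (fun l => by
      have := hx l
      split <;> linarith)
  have h3 : c i * (ε * K.card) < δ := by
    have : c i * (ε * K.card) = δ * ((K.card : ℝ) / ((K.card : ℝ) + 1)) := by
      rw [hεdef]
      field_simp
    rw [this]
    have hlt : (K.card : ℝ) / ((K.card : ℝ) + 1) < 1 := by
      rw [div_lt_one hcard]
      linarith
    nlinarith
  rw [hDZ] at hδdef
  linarith

end Dev

/-! ### Interchangeability of equilibria -/

/-- A profile `(x, z)` (player `i` plays `x`, player `1 - i` plays `z`) which is a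
Nash equilibrium, written component-wise via `Ppay`. -/
def NashPair {m : ℕ} (γ : ℝ) (v : Fin m → ℝ) (c : Fin 2 → ℝ)
    (ρ : Fin 2 → Matrix (Fin m) (Fin m) ℝ) (i : Fin 2) (x z : Fin m → ℝ) : Prop :=
  (∀ k, 0 ≤ x k) ∧ (∀ k, 0 ≤ z k) ∧
  (∀ e', (∀ k, 0 ≤ e' k) → Ppay γ v c ρ i e' z ≤ Ppay γ v c ρ i x z) ∧
  (∀ e', (∀ k, 0 ≤ e' k) → Ppay γ v c ρ (1 - i) e' x ≤ Ppay γ v c ρ (1 - i) z x)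

section Inter
variable {m : ℕ} {γ : ℝ} {v : Fin m → ℝ} {c : Fin 2 → ℝ}
  {ρ : Fin 2 → Matrix (Fin m) (Fin m) ℝ}

lemma nash_to_pair {e : Fin 2 → Fin m → ℝ} (h : IsNashEq γ v c ρ e) (i : Fin 2) :
    NashPair γ v c ρ i (e i) (e (1 - i)) := by
  refine ⟨h.1 i, h.1 (1 - i), fun e' he' => nash_P h i e' he', fun e' he' => ?_⟩
  have := nash_P h (1 - i) e' he'
  rwa [fin2_sub_sub] at this

/-- Interchangeability: crossing two equilibria yields an equilibrium. -/
lemma nash_cross (hγ0 : 0 < γ) (hv : ∀ k, 0 < v k) (hc : ∀ i, 0 < c i)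
    (hρ : ∀ i k l, 0 ≤ ρ i k l) (i : Fin 2) {a₁ a₂ b₁ b₂ : Fin m → ℝ}
    (ha : NashPair γ v c ρ i a₁ a₂) (hb : NashPair γ v c ρ i b₁ b₂) :
    NashPair γ v c ρ i a₁ b₂ := by
  obtain ⟨ha₁, ha₂, haBR1, haBR2⟩ := ha
  obtain ⟨hb₁, hb₂, hbBR1, hbBR2⟩ := hb
  -- the four best-response domination inequalities
  have K1 : Ppay γ v c ρ i a₁ b₂ + DZv v ρ i a₁ b₂ ≤ Ppay γ v c ρ i b₁ b₂ :=
    br_dom hγ0 hv hc hρ i ha₁ hb₂ hbBR1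
  have K2 : Ppay γ v c ρ (1 - i) b₂ a₁ + DZv v ρ (1 - i) b₂ a₁
      ≤ Ppay γ v c ρ (1 - i) a₂ a₁ := by
    refine br_dom hγ0 hv hc hρ (1 - i) hb₂ ha₁ ?_
    intro e' he'
    exact haBR2 e' he'
  have K3 : Ppay γ v c ρ i b₁ a₂ + DZv v ρ i b₁ a₂ ≤ Ppay γ v c ρ i a₁ a₂ :=
    br_dom hγ0 hv hc hρ i hb₁ ha₂ haBR1
  have K4 : Ppay γ v c ρ (1 - i) a₂ b₁ + DZv v ρ (1 - i) a₂ b₁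
      ≤ Ppay γ v c ρ (1 - i) b₂ b₁ := by
    refine br_dom hγ0 hv hc hρ (1 - i) ha₂ hb₁ ?_
    intro e' he'
    exact hbBR2 e' he'
  rw [DZv_symm] at K2 K4
  -- the four zero-sum identities
  have Sa := P_add_P (v := v) (c := c) hγ0 hρ i ha₁ ha₂
  have Sb := P_add_P (v := v) (c := c) hγ0 hρ i hb₁ hb₂
  have S1 := P_add_P (v := v) (c := c) hγ0 hρ i ha₁ hb₂
  have S2 := P_add_P (v := v) (c := c) hγ0 hρ i hb₁ ha₂
  -- nonnegativity of the doubly-zero values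
  have D1 := DZv_nonneg (ρ := ρ) hv i a₁ b₂
  have D2 := DZv_nonneg (ρ := ρ) hv i b₁ a₂
  have Da := DZv_nonneg (ρ := ρ) hv i a₁ a₂
  have Db := DZv_nonneg (ρ := ρ) hv i b₁ b₂
  -- conclude the equalities
  have E1 : Ppay γ v c ρ i b₁ b₂ = Ppay γ v c ρ i a₁ b₂ := by linarith
  have E2 : Ppay γ v c ρ (1 - i) a₂ a₁ = Ppay γ v c ρ (1 - i) b₂ a₁ := by linarith
  exact ⟨ha₁, hb₂,
    fun e' he' => (hbBR1 e' he').trans (le_of_eq E1),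
    fun e' he' => (haBR2 e' he').trans (le_of_eq E2)⟩

/-- If `u` and `w` are both best responses to `z`, then their effective efforts agree
on every battlefield where the opponent's effective effort is nonzero. -/
lemma br_unique (hγ0 : 0 < γ) (hγ1 : γ ≤ 1) (hv : ∀ k, 0 < v k)
    (hρ : ∀ i k l, 0 ≤ ρ i k l) (i : Fin 2) {u w z : Fin m → ℝ}
    (hu : ∀ k, 0 ≤ u k) (hw : ∀ k, 0 ≤ w k) (hz : ∀ k, 0 ≤ z k)
    (hBRu : ∀ e', (∀ k, 0 ≤ e' k) → Ppay γ v c ρ i e' z ≤ Ppay γ v c ρ i u z)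
    (hBRw : ∀ e', (∀ k, 0 ≤ e' k) → Ppay γ v c ρ i e' z ≤ Ppay γ v c ρ i w z)
    (k : Fin m) (hk : effY (ρ (1 - i)) z k ≠ 0) :
    effY (ρ i) u k = effY (ρ i) w k := by
  by_contra hne
  have hZpos : 0 < effY (ρ (1 - i)) z k :=
    lt_of_le_of_ne (effY_nonneg (hρ (1 - i)) hz k) (Ne.symm hk)
  have heq : Ppay γ v c ρ i u z = Ppay γ v c ρ i w z :=
    le_antisymm (hBRw u hu) (hBRu w hw)
  set md : Fin m → ℝ := fun l => (u l + w l) / 2 with hmd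
  have hmdnn : ∀ l, 0 ≤ md l := fun l => by
    have := hu l; have := hw l
    simp only [hmd]; linarith
  -- strict midpoint improvement
  have hterm : ∀ l : Fin m,
      v l * ((tullock γ (effY (ρ i) u l) (effY (ρ (1 - i)) z l)
        + tullock γ (effY (ρ i) w l) (effY (ρ (1 - i)) z l)) / 2)
      ≤ v l * tullock γ (effY (ρ i) md l) (effY (ρ (1 - i)) z l) := by
    intro l
    rw [hmd, effY_half]
    exact mul_le_mul_of_nonneg_left
      (tullock_midpoint hγ0 hγ1 (effY_nonneg (hρ i) hu l) (effY_nonneg (hρ i) hw l)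
        (effY_nonneg (hρ (1 - i)) hz l)) (hv l).le
  have hstrict :
      v k * ((tullock γ (effY (ρ i) u k) (effY (ρ (1 - i)) z k)
        + tullock γ (effY (ρ i) w k) (effY (ρ (1 - i)) z k)) / 2)
      < v k * tullock γ (effY (ρ i) md k) (effY (ρ (1 - i)) z k) := by
    rw [hmd, effY_half]
    exact mul_lt_mul_of_pos_left
      (tullock_midpoint_strict hγ0 hγ1 (effY_nonneg (hρ i) hu k) (effY_nonneg (hρ i) hw k)
        hZpos hne) (hv k)
  have hsumlt : ∑ l, v l * ((tullock γ (effY (ρ i) u l) (effY (ρ (1 - i)) z l)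
        + tullock γ (effY (ρ i) w l) (effY (ρ (1 - i)) z l)) / 2)
      < ∑ l, v l * tullock γ (effY (ρ i) md l) (effY (ρ (1 - i)) z l) :=
    Finset.sum_lt_sum (fun l _ => hterm l) ⟨k, Finset.mem_univ k, hstrict⟩
  have hsplit : ∑ l, v l * ((tullock γ (effY (ρ i) u l) (effY (ρ (1 - i)) z l)
        + tullock γ (effY (ρ i) w l) (effY (ρ (1 - i)) z l)) / 2)
      = ((∑ l, v l * tullock γ (effY (ρ i) u l) (effY (ρ (1 - i)) z l))
        + ∑ l, v l * tullock γ (effY (ρ i) w l) (effY (ρ (1 - i)) z l)) / 2 := by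
    rw [Finset.sum_congr rfl (fun l _ => by ring :
      ∀ l ∈ Finset.univ, v l * ((tullock γ (effY (ρ i) u l) (effY (ρ (1 - i)) z l)
        + tullock γ (effY (ρ i) w l) (effY (ρ (1 - i)) z l)) / 2)
        = (v l * tullock γ (effY (ρ i) u l) (effY (ρ (1 - i)) z l)
          + v l * tullock γ (effY (ρ i) w l) (effY (ρ (1 - i)) z l)) / 2)]
    simp only [← Finset.sum_div, Finset.sum_add_distrib]
  have hcost : ∑ l, md l = ((∑ l, u l) + ∑ l, w l) / 2 := sum_half u w
  have hPmid : (Ppay γ v c ρ i u z + Ppay γ v c ρ i w z) / 2 < Ppay γ v c ρ i md z := by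
    unfold Ppay
    rw [hcost]
    rw [hsplit] at hsumlt
    ring_nf
    ring_nf at hsumlt
    linarith
  have := hBRu md hmdnn
  rw [heq] at hPmid
  simp only [hmd] at this hPmid
  linarith
end Inter

/-- for any pair of equilibrium effective-effort vectors
(possibly arising from different equilibria `eA`, `eB`), any player `i`, any
battlefield `k`, and any other equilibrium effective-effort vector of the
opponent (arising from equilibrium `eC`), either the `i`-component is zero at
`k` or the opponent components agree at `k`. -/
theorem equilibrium_effective_effort_dichotomy (m : ℕ) (γ : ℝ) (hγ0 : 0 < γ) (hγ1 : γ ≤ 1)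
    (v : Fin m → ℝ) (hv : ∀ k, 0 < v k)
    (c : Fin 2 → ℝ) (hc : ∀ i, 0 < c i)
    (ρ : Fin 2 → Matrix (Fin m) (Fin m) ℝ)
    (hρ : ∀ i k l, 0 ≤ ρ i k l) (hρd : ∀ i k, ρ i k k = 0)
    (eA eB eC : Fin 2 → Fin m → ℝ)
    (hA : IsNashEq γ v c ρ eA) (hB : IsNashEq γ v c ρ eB)
    (hC : IsNashEq γ v c ρ eC) (i : Fin 2) (k : Fin m) :
    effY (ρ i) (![eA 0, eB 1] i) k = 0 ∨
    effY (ρ (1 - i)) (![eA 0, eB 1] (1 - i)) k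
      = effY (ρ (1 - i)) (eC (1 - i)) k := by
  have pA : NashPair γ v c ρ 0 (eA 0) (eA 1) := nash_to_pair hA 0
  have pB : NashPair γ v c ρ 0 (eB 0) (eB 1) := nash_to_pair hB 0
  have pC : NashPair γ v c ρ 0 (eC 0) (eC 1) := nash_to_pair hC 0
  have pAB : NashPair γ v c ρ 0 (eA 0) (eB 1) := nash_cross hγ0 hv hc hρ 0 pA pB
  have pAC : NashPair γ v c ρ 0 (eA 0) (eC 1) := nash_cross hγ0 hv hc hρ 0 pAB pC
  have pCB : NashPair γ v c ρ 0 (eC 0) (eB 1) := nash_cross hγ0 hv hc hρ 0 pC pB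
  fin_cases i
  · -- i = 0
    by_cases h0 : effY (ρ 0) (eA 0) k = 0
    · exact Or.inl h0
    · refine Or.inr ?_
      exact br_unique (c := c) hγ0 hγ1 hv hρ 1 (hB.1 1) (hC.1 1) (hA.1 0)
        (fun e' he' => pAB.2.2.2 e' he') (fun e' he' => pAC.2.2.2 e' he') k h0
  · -- i = 1
    by_cases h0 : effY (ρ 1) (eB 1) k = 0
    · exact Or.inl h0
    · refine Or.inr ?_
      exact br_unique (c := c) hγ0 hγ1 hv hρ 0 (hA.1 0) (hC.1 0) (hB.1 1)
        (fun e' he' => pAB.2.2.1 e' he') (fun e' he' => pCB.2.2.1 e' he') k h0
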